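/- Let D be a discrete subset of X = ℂⁿ \ {0} (n ≥ 2) which is not discrete as a subset of ℂⁿ, i.e., there is a sequence γ_k ∈ D with γ_k → 0. Then D is not tame in X: with the exhaustion function τ(x) = max{‖x‖, ‖x‖^{-1}}, choosing ζ with ζ(γ_k) > k/‖γ_k‖, no holomorphic automorphism φ of X satisfies τ(φ(x)) ≥ ζ(x) for all x ∈ D. -/

import Mathlib

open Set Filter

open Metric

section Helpers

lemma exists_orth_unit {n : ℕ} (hn : 2 ≤ n) (y : EuclideanSpace ℂ (Fin n)) (hy : y ≠ 0) :
    ∃ v : EuclideanSpace ℂ (Fin n), ‖v‖ = 1 ∧ (inner ℂ y v : ℂ) = 0 := by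
  have hne : (ℂ ∙ y)ᗮ ≠ ⊥ := by
    intro hbot
    have htop : (ℂ ∙ y) = ⊤ := Submodule.orthogonal_eq_bot_iff.mp hbot
    have h1 : Module.finrank ℂ (EuclideanSpace ℂ (Fin n)) = 1 := by
      rw [← finrank_top ℂ, ← htop, finrank_span_singleton hy]
    rw [finrank_euclideanSpace_fin] at h1
    omega
  obtain ⟨u, hu, hu0⟩ := Submodule.exists_mem_ne_zero_of_ne_bot hne
  refine ⟨(‖u‖⁻¹ : ℂ) • u, ?_, ?_⟩
  · rw [norm_smul]
    have : ‖u‖ ≠ 0 := norm_ne_zero_iff.mpr hu0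
    simp [abs_of_nonneg (norm_nonneg u), this]
  · have : (inner ℂ y u : ℂ) = 0 := by
      have := (Submodule.mem_orthogonal _ u).mp hu y (Submodule.mem_span_singleton_self y)
      exact this
    rw [inner_smul_right, this, mul_zero]

lemma add_smul_orth_ne_zero {n : ℕ} {a v : EuclideanSpace ℂ (Fin n)} (ha : a ≠ 0)
    (hav : (inner ℂ a v : ℂ) = 0) (z : ℂ) : a + z • v ≠ 0 := by
  intro h0
  have h : (inner ℂ a (a + z • v) : ℂ) = 0 := by rw [h0, inner_zero_right]
  rw [inner_add_right, inner_smul_right, hav, mul_zero, add_zero,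
    inner_self_eq_norm_sq_to_K] at h
  have : ‖a‖ = 0 := by
    have := congrArg (fun z : ℂ => ‖z‖) h
    simpa using this
  exact ha (norm_eq_zero.mp this)

lemma bound_near_zero {n : ℕ} (hn : 2 ≤ n) (ψ : EuclideanSpace ℂ (Fin n) → EuclideanSpace ℂ (Fin n))
    (hψ : DifferentiableOn ℂ ψ {x | x ≠ 0}) :
    ∃ M : ℝ, 0 ≤ M ∧ ∀ y : EuclideanSpace ℂ (Fin n), y ≠ 0 → ‖y‖ ≤ 1/2 → ‖ψ y‖ ≤ M := by
  have hopen : IsOpen {x : EuclideanSpace ℂ (Fin n) | x ≠ 0} := isOpen_compl_singleton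
  have hsub : Metric.sphere (0 : EuclideanSpace ℂ (Fin n)) 1 ⊆ {x | x ≠ 0} := by
    intro x hx
    simp only [mem_sphere_iff_norm, sub_zero] at hx
    intro h0; rw [h0] at hx; simp at hx
  obtain ⟨M, hM⟩ := (isCompact_sphere (0 : EuclideanSpace ℂ (Fin n)) 1).exists_bound_of_continuousOn
    ((hψ.continuousOn).mono hsub)
  refine ⟨max M 0, le_max_right _ _, fun y hy hy2 => ?_⟩
  obtain ⟨v, hv1, hvy⟩ := exists_orth_unit hn y hy
  set r : ℝ := Real.sqrt (1 - ‖y‖^2) with hr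
  have hy2' : ‖y‖^2 ≤ (1/2)^2 := by
    apply pow_le_pow_left₀ (norm_nonneg y) hy2
  have hrpos : 0 < r := Real.sqrt_pos.mpr (by nlinarith)
  have hne : ∀ w : ℂ, y + w • v ≠ 0 := by
    intro w h0
    have : (inner ℂ y (y + w • v) : ℂ) = 0 := by rw [h0, inner_zero_right]
    rw [inner_add_right, inner_smul_right, hvy, mul_zero, add_zero, inner_self_eq_norm_sq_to_K] at this
    have : ‖y‖ = 0 := by
      have := congrArg (fun z : ℂ => ‖z‖) this
      simpa using this
    exact hy (norm_eq_zero.mp this)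
  have hnorm : ∀ w : ℂ, ‖y + w • v‖^2 = ‖y‖^2 + ‖w‖^2 := by
    intro w
    have hz : (inner ℂ y (w • v) : ℂ) = 0 := by rw [inner_smul_right, hvy, mul_zero]
    have := norm_add_sq_eq_norm_sq_add_norm_sq_of_inner_eq_zero y (w • v) hz
    rw [norm_smul, hv1, mul_one] at this
    rw [sq, sq, sq]; exact this
  set g : ℂ → EuclideanSpace ℂ (Fin n) := fun w => ψ (y + w • v) with hg
  have hdiff : Differentiable ℂ g := by
    intro w
    have haff : DifferentiableAt ℂ (fun w : ℂ => y + w • v) w :=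
      (differentiable_id.smul_const v).const_add y |>.differentiableAt
    exact (hψ.differentiableAt (hopen.mem_nhds (hne w))).comp w haff
  have hbound : ‖g 0‖ ≤ max M 0 := by
    apply Complex.norm_le_of_forall_mem_frontier_norm_le (isBounded_ball (x := (0:ℂ)) (r := r))
      hdiff.diffContOnCl
    · intro w hw
      rw [frontier_ball _ hrpos.ne'] at hw
      simp only [mem_sphere_iff_norm, sub_zero] at hw
      have h1 : ‖y + w • v‖^2 = 1 := by rw [hnorm, hw]; nlinarith [Real.sq_sqrt (by nlinarith : (0:ℝ) ≤ 1 - ‖y‖^2)]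
      have h2 : ‖y + w • v‖ = 1 := by
        nlinarith [norm_nonneg (y + w • v)]
      exact le_max_of_le_left (hM _ (by simpa [mem_sphere_iff_norm] using h2))
    · exact subset_closure (mem_ball_self hrpos)
  simpa [hg] using hbound

lemma osc_pair {n : ℕ} {ψ : EuclideanSpace ℂ (Fin n) → EuclideanSpace ℂ (Fin n)}
    (hψ : DifferentiableOn ℂ ψ {x | x ≠ 0}) {M : ℝ}
    (hM : ∀ y : EuclideanSpace ℂ (Fin n), y ≠ 0 → ‖y‖ ≤ 1/2 → ‖ψ y‖ ≤ M)
    {s : ℝ} (hs : 0 < s) (hs16 : s ≤ 1/16) {a b : EuclideanSpace ℂ (Fin n)}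
    (hline : ∀ t : ℂ, a + t • (b - a) ≠ 0) (hna : ‖a‖ ≤ s) (hnb : ‖b‖ ≤ s) :
    ‖ψ b - ψ a‖ ≤ (2*M+1) * (8*s) := by
  have hopen : IsOpen {x : EuclideanSpace ℂ (Fin n) | x ≠ 0} := isOpen_compl_singleton
  set R : ℝ := 1/(8*s) with hR
  have hRpos : 0 < R := by positivity
  have hR2 : 2 ≤ R := by
    rw [hR]; rw [le_div_iff₀ (by positivity)]; linarith
  have hM0 : 0 ≤ M := by
    have := hM a (by simpa using hline 0) (by linarith)
    exact le_trans (norm_nonneg _) this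
  set g : ℂ → EuclideanSpace ℂ (Fin n) := fun w => ψ (a + w • (b - a)) with hg
  have harg : ∀ w : ℂ, ‖w‖ ≤ R → ‖a + w • (b - a)‖ ≤ 1/2 := by
    intro w hw
    have h1 : ‖b - a‖ ≤ 2*s := by
      calc ‖b - a‖ ≤ ‖b‖ + ‖a‖ := norm_sub_le _ _
      _ ≤ 2*s := by linarith
    calc ‖a + w • (b - a)‖ ≤ ‖a‖ + ‖w‖ * ‖b - a‖ := by
          refine le_trans (norm_add_le _ _) ?_
          rw [norm_smul]
      _ ≤ s + R * (2*s) := by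
          have : ‖w‖ * ‖b - a‖ ≤ R * (2*s) := by
            apply mul_le_mul hw h1 (norm_nonneg _) (le_of_lt hRpos)
          linarith
      _ ≤ 1/2 := by
          have hRs : R * (2*s) = 1/4 := by
            rw [hR]; field_simp; ring
          rw [hRs]; linarith
  have hdiff : Differentiable ℂ g := by
    intro w
    have haff : DifferentiableAt ℂ (fun w : ℂ => a + w • (b - a)) w :=
      ((differentiable_id.smul_const (b - a)).const_add a).differentiableAt
    exact (hψ.differentiableAt (hopen.mem_nhds (hline w))).comp w haff
  have hgb : ∀ w ∈ ball (0:ℂ) R, ‖g w‖ ≤ M := by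
    intro w hw
    simp only [mem_ball, dist_zero_right] at hw
    exact hM _ (hline w) (harg w hw.le)
  have hmaps : MapsTo g (ball (0:ℂ) R) (ball (g 0) (2*M+1)) := by
    intro w hw
    rw [mem_ball, dist_eq_norm]
    calc ‖g w - g 0‖ ≤ ‖g w‖ + ‖g 0‖ := norm_sub_le _ _
      _ ≤ M + M := add_le_add (hgb w hw) (hgb 0 (mem_ball_self hRpos))
      _ < 2*M+1 := by linarith
  have h1mem : (1:ℂ) ∈ ball (0:ℂ) R := by
    simp only [mem_ball, dist_zero_right, norm_one]
    linarith
  have := Complex.dist_le_div_mul_dist_of_mapsTo_ball hdiff.differentiableOn (hmaps.mono_right ball_subset_closedBall) h1mem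
  have hg1 : g 1 = ψ b := by simp [hg]
  have hg0 : g 0 = ψ a := by simp [hg]
  rw [hg1, hg0, dist_eq_norm] at this
  calc ‖ψ b - ψ a‖ ≤ (2*M+1)/R * dist (1:ℂ) 0 := this
    _ = (2*M+1) * (8*s) := by
        rw [dist_zero_right, norm_one, mul_one, hR, one_div]; field_simp

lemma osc_near_zero {n : ℕ} (hn : 2 ≤ n)
    {ψ : EuclideanSpace ℂ (Fin n) → EuclideanSpace ℂ (Fin n)}
    (hψ : DifferentiableOn ℂ ψ {x | x ≠ 0}) {M : ℝ}
    (hM : ∀ y : EuclideanSpace ℂ (Fin n), y ≠ 0 → ‖y‖ ≤ 1/2 → ‖ψ y‖ ≤ M)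
    {s : ℝ} (hs : 0 < s) (hs32 : s ≤ 1/32) {a b : EuclideanSpace ℂ (Fin n)}
    (ha : a ≠ 0) (hb : b ≠ 0) (hna : ‖a‖ ≤ s) (hnb : ‖b‖ ≤ s) :
    ‖ψ a - ψ b‖ ≤ (2*M+1) * (32*s) := by
  have hM0 : 0 ≤ M := le_trans (norm_nonneg _) (hM a ha (by linarith))
  by_cases hdep : ∃ μ : ℂ, b = μ • a
  · -- hop through c = a + s • v
    obtain ⟨μ, hμ⟩ := hdep
    have hμ0 : μ ≠ 0 := by rintro rfl; simp at hμ; exact hb hμ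
    obtain ⟨v, hv1, hav⟩ := exists_orth_unit hn a ha
    set c : EuclideanSpace ℂ (Fin n) := a + (s:ℂ) • v with hc
    have hnc : ‖c‖ ≤ 2*s := by
      calc ‖c‖ ≤ ‖a‖ + ‖(s:ℂ) • v‖ := norm_add_le _ _
        _ ≤ s + s := by
            rw [norm_smul, hv1, mul_one]
            simp only [Complex.norm_real, Real.norm_eq_abs, abs_of_pos hs]
            linarith
        _ = 2*s := by ring
    have hva : (inner ℂ v a : ℂ) = 0 := by rwa [inner_eq_zero_symm] at hav
    have hvv : (inner ℂ v v : ℂ) = 1 := by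
      rw [inner_self_eq_norm_sq_to_K, hv1]; norm_num
    -- line a to c avoids 0
    have hline1 : ∀ t : ℂ, a + t • (c - a) ≠ 0 := by
      intro t
      have : c - a = (s:ℂ) • v := by rw [hc]; abel
      rw [this, smul_smul]
      exact add_smul_orth_ne_zero ha hav _
    -- line c to b avoids 0
    have hline2 : ∀ t : ℂ, c + t • (b - c) ≠ 0 := by
      intro t h0
      have hinner : (inner ℂ v (c + t • (b - c)) : ℂ) = (1 - t) * s := by
        have hic : (inner ℂ v c : ℂ) = (s:ℂ) := by
          rw [hc, inner_add_right, inner_smul_right, hva, hvv, zero_add, mul_one]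
        have hib : (inner ℂ v b : ℂ) = 0 := by
          rw [hμ, inner_smul_right, hva, mul_zero]
        rw [inner_add_right, inner_smul_right, inner_sub_right, hib, hic]
        ring
      rw [h0, inner_zero_right] at hinner
      have hts : (1 - t) = 0 ∨ (s:ℂ) = 0 := mul_eq_zero.mp hinner.symm
      have ht1 : t = 1 := by
        rcases hts with h | h
        · linear_combination -h
        · exact absurd h (by exact_mod_cast hs.ne')
      rw [ht1, one_smul] at h0
      have : b = 0 := by rw [← h0]; abel
      exact hb this
    have h1 := osc_pair hψ hM (by linarith : (0:ℝ) < 2*s) (by linarith) hline1 (by linarith) hnc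
    have h2 := osc_pair hψ hM (by linarith : (0:ℝ) < 2*s) (by linarith) hline2 hnc (by linarith)
    calc ‖ψ a - ψ b‖ ≤ ‖ψ c - ψ a‖ + ‖ψ b - ψ c‖ := by
          have : ψ a - ψ b = -(ψ c - ψ a) - (ψ b - ψ c) := by abel
          rw [this]
          refine le_trans (norm_sub_le _ _) ?_
          rw [norm_neg]
      _ ≤ (2*M+1) * (8*(2*s)) + (2*M+1) * (8*(2*s)) := add_le_add h1 h2
      _ = (2*M+1) * (32*s) := by ring
  · -- direct line
    have hline : ∀ t : ℂ, a + t • (b - a) ≠ 0 := by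
      intro t h0
      rcases eq_or_ne t 0 with rfl | ht
      · simp at h0; exact ha h0
      · apply hdep
        refine ⟨(t-1)/t, ?_⟩
        have hb' : t • b = (t - 1) • a := by
          have : a + t • b - t • a = 0 := by
            rw [← h0]; rw [smul_sub]; abel
          have h2 : t • b = t • a - a := by
            rw [← sub_eq_zero]; rw [← this]; abel
          rw [h2, sub_smul, one_smul]
        have := congrArg (fun x => t⁻¹ • x) hb'
        simpa [smul_smul, inv_mul_cancel₀ ht, div_eq_inv_mul, mul_comm] using this
    have h1 := osc_pair hψ hM hs (by linarith) hline hna hnb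
    calc ‖ψ a - ψ b‖ = ‖ψ b - ψ a‖ := by rw [norm_sub_rev]
      _ ≤ (2*M+1) * (8*s) := h1
      _ ≤ (2*M+1) * (32*s) := by nlinarith

end Helpers

/-- A holomorphic automorphism of X = ℂⁿ \ {0}. -/
def IsAutPunctured (n : ℕ)
    (φ : EuclideanSpace ℂ (Fin n) → EuclideanSpace ℂ (Fin n)) : Prop :=
  Set.BijOn φ {x | x ≠ 0} {x | x ≠ 0} ∧
  DifferentiableOn ℂ φ {x | x ≠ 0} ∧
  ∃ ψ : EuclideanSpace ℂ (Fin n) → EuclideanSpace ℂ (Fin n),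
    Set.BijOn ψ {x | x ≠ 0} {x | x ≠ 0} ∧ DifferentiableOn ℂ ψ {x | x ≠ 0} ∧
    ∀ x : EuclideanSpace ℂ (Fin n), x ≠ 0 → ψ (φ x) = x ∧ φ (ψ x) = x

/-- a discrete subset of ℂⁿ \ {0} (n ≥ 2) accumulating at the origin is
not tame: with τ(x) = max(‖x‖, ‖x‖⁻¹), any ζ with ζ(γ_k) > k/‖γ_k‖ defeats every
automorphism of ℂⁿ \ {0}. -/
theorem stmt11 {n : ℕ} (hn : 2 ≤ n) (D : Set (EuclideanSpace ℂ (Fin n)))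
    (hD0 : ∀ x ∈ D, x ≠ 0)
    (hDdisc : ∀ p : EuclideanSpace ℂ (Fin n), p ≠ 0 → ¬ AccPt p (Filter.principal D))
    (γ : ℕ → EuclideanSpace ℂ (Fin n)) (hγD : ∀ k, γ k ∈ D)
    (hγ : Tendsto γ atTop (nhds 0)) :
    ∀ ζ : EuclideanSpace ℂ (Fin n) → ℝ, (∀ x, 0 ≤ ζ x) →
      (∀ k : ℕ, (k : ℝ) / ‖γ k‖ < ζ (γ k)) →
      ∀ φ, IsAutPunctured n φ →
        ∃ x ∈ D, max ‖φ x‖ (‖φ x‖)⁻¹ < ζ x := by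
  intro ζ hζ0 hζ φ hφ
  obtain ⟨hbij, hφdiff, ψ, hψbij, hψdiff, hinv⟩ := hφ
  by_contra hcon
  push_neg at hcon
  obtain ⟨M₁, hM₁0, hM₁⟩ := bound_near_zero hn φ hφdiff
  obtain ⟨M, hM0, hM⟩ := bound_near_zero hn ψ hψdiff
  set C : ℝ := (2*M+1) * 32 with hC
  have hCpos : 0 < C := by positivity
  have hx0 : ∀ k, γ k ≠ 0 := fun k => hD0 _ (hγD k)
  have hnp : ∀ k, 0 < ‖γ k‖ := fun k => norm_pos_iff.mpr (hx0 k)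
  have hy0 : ∀ k, φ (γ k) ≠ 0 := fun k => hbij.mapsTo (hx0 k)
  have hyp : ∀ k, 0 < ‖φ (γ k)‖ := fun k => norm_pos_iff.mpr (hy0 k)
  have hψφ : ∀ k, ψ (φ (γ k)) = γ k := fun k => (hinv _ (hx0 k)).1
  have htends : Tendsto (fun k => ‖γ k‖) atTop (nhds 0) :=
    tendsto_zero_iff_norm_tendsto_zero.mp hγ
  -- all terms eventually have norm ≤ 1/2
  obtain ⟨K₁, hK₁⟩ : ∃ K₁ : ℕ, ∀ k ≥ K₁, ‖γ k‖ ≤ 1/2 := by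
    have := htends.eventually_lt_const (by norm_num : (0:ℝ) < 1/2)
    rw [eventually_atTop] at this
    obtain ⟨K, hK⟩ := this
    exact ⟨K, fun k hk => (hK k hk).le⟩
  -- key: for suitable k, φ (γ k) is very small
  have key : ∀ k : ℕ, K₁ ≤ k → M₁ < 2*(k:ℝ) → 1 ≤ (k:ℝ) →
      ‖φ (γ k)‖ < ‖γ k‖ / (k:ℝ) := by
    intro k hkK hkM hk1
    have hsmall := hK₁ k hkK
    have hr := hnp k
    have hk0 : (0:ℝ) < k := by linarith
    have hA : M₁ < (k:ℝ)/‖γ k‖ := by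
      have h2 : 2*(k:ℝ) ≤ (k:ℝ)/‖γ k‖ := by
        rw [le_div_iff₀ hr]
        nlinarith
      linarith
    have hmax : (k:ℝ)/‖γ k‖ < max ‖φ (γ k)‖ (‖φ (γ k)‖)⁻¹ :=
      lt_of_lt_of_le (hζ k) (hcon _ (hγD k))
    have hu : ‖φ (γ k)‖ ≤ M₁ := hM₁ _ (hx0 k) hsmall
    have hinvbig : (k:ℝ)/‖γ k‖ < (‖φ (γ k)‖)⁻¹ := by
      rcases lt_max_iff.mp hmax with h | h
      · linarith
      · exact h
    -- from A < u⁻¹ with u > 0, A > 0 deduce u < A⁻¹ = ‖γ k‖/k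
    have hu0 := hyp k
    have h1 : ((k:ℝ)/‖γ k‖) * ‖φ (γ k)‖ < 1 := by
      have := mul_lt_mul_of_pos_right hinvbig hu0
      rwa [inv_mul_cancel₀ hu0.ne'] at this
    rw [div_mul_eq_mul_div, div_lt_one hr] at h1
    rw [lt_div_iff₀ hk0]
    nlinarith
  -- choose k large
  obtain ⟨k₀, hk₀⟩ := exists_nat_ge (max (2*C) M₁)
  set k : ℕ := max K₁ (max k₀ 16) with hk
  have hkK₁ : K₁ ≤ k := le_max_left _ _
  have hk16 : (16:ℕ) ≤ k := le_trans (le_max_right k₀ 16) (le_max_right _ _)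
  have hk16' : (16:ℝ) ≤ (k:ℝ) := by exact_mod_cast hk16
  have hkk₀ : (k₀:ℝ) ≤ (k:ℝ) := by
    have : k₀ ≤ k := le_trans (le_max_left k₀ 16) (le_max_right _ _)
    exact_mod_cast this
  have hkC : 2*C ≤ (k:ℝ) := le_trans (le_trans (le_max_left _ _) hk₀) hkk₀
  have hkM₁ : M₁ < 2*(k:ℝ) := by
    have : M₁ ≤ (k:ℝ) := le_trans (le_trans (le_max_right _ _) hk₀) hkk₀
    linarith
  have hk1 : (1:ℝ) ≤ (k:ℝ) := by linarith
  have hyk := key k hkK₁ hkM₁ hk1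
  have hyksmall : ‖φ (γ k)‖ ≤ 1/32 := by
    have h1 : ‖γ k‖ / (k:ℝ) ≤ (1/2) / 16 :=
      div_le_div₀ (by norm_num) (hK₁ k hkK₁) (by norm_num) hk16'
    calc ‖φ (γ k)‖ ≤ ‖γ k‖ / (k:ℝ) := hyk.le
      _ ≤ (1/2)/16 := h1
      _ = 1/32 := by norm_num
  -- choose j even larger with γ j tiny
  obtain ⟨K₂, hK₂⟩ : ∃ K₂ : ℕ, ∀ j ≥ K₂,
      ‖γ j‖ < min ‖φ (γ k)‖ ((1/4) * ‖γ k‖) := by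
    have hpos : (0:ℝ) < min ‖φ (γ k)‖ ((1/4) * ‖γ k‖) :=
      lt_min (hyp k) (by have := hnp k; linarith)
    have := htends.eventually_lt_const hpos
    rw [eventually_atTop] at this
    exact this
  set j : ℕ := max K₂ k with hj
  have hjK₂ : K₂ ≤ j := le_max_left _ _
  have hjk : k ≤ j := le_max_right _ _
  have hjk' : (k:ℝ) ≤ (j:ℝ) := by exact_mod_cast hjk
  have hγj := hK₂ j hjK₂
  have hyj := key j (le_trans hkK₁ hjk) (by linarith) (by linarith)
  have hyjle : ‖φ (γ j)‖ ≤ ‖φ (γ k)‖ := by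
    have h1 : ‖γ j‖ / (j:ℝ) ≤ ‖γ j‖ := by
      rw [div_le_iff₀ (by linarith : (0:ℝ) < (j:ℝ))]
      nlinarith [norm_nonneg (γ j)]
    have h2 : ‖γ j‖ < ‖φ (γ k)‖ := lt_of_lt_of_le hγj (min_le_left _ _)
    linarith
  -- apply oscillation bound
  have hosc := osc_near_zero hn hψdiff hM (hyp k) hyksmall (hy0 k) (hy0 j)
    (le_refl _) hyjle
  rw [hψφ k, hψφ j] at hosc
  -- final contradiction
  have hCk : C * ‖φ (γ k)‖ ≤ (1/2) * ‖γ k‖ := by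
    have h1 : C * ‖φ (γ k)‖ ≤ C * (‖γ k‖ / (k:ℝ)) :=
      mul_le_mul_of_nonneg_left hyk.le (le_of_lt hCpos)
    have h2 : C * (‖γ k‖ / (k:ℝ)) ≤ (1/2) * ‖γ k‖ := by
      rw [mul_div_assoc', div_le_iff₀ (by linarith : (0:ℝ) < (k:ℝ))]
      nlinarith [hnp k]
    linarith
  have hfinal : ‖γ k‖ ≤ (3/4) * ‖γ k‖ := by
    have htri : ‖γ k‖ ≤ ‖γ k - γ j‖ + ‖γ j‖ := by
      have := norm_add_le (γ k - γ j) (γ j)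
      simpa using this
    have hoc : ‖γ k - γ j‖ ≤ C * ‖φ (γ k)‖ := by
      calc ‖γ k - γ j‖ ≤ (2*M+1) * (32 * ‖φ (γ k)‖) := hosc
        _ = C * ‖φ (γ k)‖ := by rw [hC]; ring
    have hj4 : ‖γ j‖ ≤ (1/4) * ‖γ k‖ := (lt_of_lt_of_le hγj (min_le_right _ _)).le
    calc ‖γ k‖ ≤ ‖γ k - γ j‖ + ‖γ j‖ := htri
      _ ≤ C * ‖φ (γ k)‖ + (1/4) * ‖γ k‖ := add_le_add hoc hj4
      _ ≤ (1/2) * ‖γ k‖ + (1/4) * ‖γ k‖ := by linarith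
      _ = (3/4) * ‖γ k‖ := by ring
  nlinarith [hnp k]
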